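/- arXiv:math/0410287 — 2 statements merged into one kernel-verified Lean document; each statement's English description precedes it below -/
import Mathlib

section
/- The Fourier transform of the Bessel kernel g_α equals ĝ_α(ξ) = (1 + 4π²|ξ|²)^(−α/2), where the Fourier transform is defined by f̂(ξ) = ∫_{ℝⁿ} f(t) exp(−2πi ξ·t) dt. -/
open MeasureTheory Real

noncomputable def besselKernel (n : ℕ) (α : ℝ) (x : EuclideanSpace ℝ (Fin n)) : ℝ :=
  (1 / ((4 * Real.pi) ^ (α / 2) * Real.Gamma (α / 2))) *
    ∫ δ in Set.Ioi (0 : ℝ),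
      Real.exp (-Real.pi * ‖x‖ ^ 2 / δ) * Real.exp (-δ / (4 * Real.pi)) *
        δ ^ ((-(n : ℝ) + α) / 2 - 1)

open Set in
theorem bessel_kernel_fourier_transform (n : ℕ) (hn : 1 ≤ n) (α : ℝ) (hα : 0 < α)
    (ξ : EuclideanSpace ℝ (Fin n)) :
    ∫ t, (besselKernel n α t : ℂ) * Complex.exp (-2 * Real.pi * Complex.I * (inner ℝ ξ t : ℝ)) =
      ((1 + 4 * Real.pi ^ 2 * ‖ξ‖ ^ 2 : ℝ) ^ (-(α / 2)) : ℝ) := by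
  have hπ : (0:ℝ) < π := Real.pi_pos
  have hπc : ((π:ℝ):ℂ) ≠ 0 := Complex.ofReal_ne_zero.mpr Real.pi_ne_zero
  set s : ℝ := (-(n:ℝ) + α)/2 - 1 with hs
  set c : ℝ := 1/(4*π) + π * ‖ξ‖^2 with hcdef
  have hc : 0 < c := by positivity
  set C : ℝ := 1 / ((4 * π) ^ (α / 2) * Real.Gamma (α / 2)) with hC
  set G : EuclideanSpace ℝ (Fin n) → ℝ → ℂ := fun t δ =>
    ((Real.exp (-π * ‖t‖ ^ 2 / δ) * Real.exp (-δ / (4 * π)) * δ ^ s : ℝ) : ℂ) *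
      Complex.exp (-2 * π * Complex.I * ((inner ℝ ξ t : ℝ) : ℂ)) with hG
  -- Step 1: pull out the constant and the character
  have step1 : (∫ t, (besselKernel n α t : ℂ) *
        Complex.exp (-2 * Real.pi * Complex.I * (inner ℝ ξ t : ℝ)))
      = (C:ℂ) * ∫ t, ∫ δ in Ioi (0:ℝ), G t δ := by
    rw [← MeasureTheory.integral_const_mul]
    congr 1 with t
    have h2 : (∫ δ in Ioi (0:ℝ),
          ((Real.exp (-π * ‖t‖ ^ 2 / δ) * Real.exp (-δ / (4 * π)) * δ ^ s : ℝ) : ℂ))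
        = ((∫ δ in Ioi (0:ℝ),
            Real.exp (-π * ‖t‖ ^ 2 / δ) * Real.exp (-δ / (4 * π)) * δ ^ s : ℝ) : ℂ) :=
      integral_ofReal
    have h3 : (∫ δ in Ioi (0:ℝ), G t δ)
        = ((∫ δ in Ioi (0:ℝ),
            Real.exp (-π * ‖t‖ ^ 2 / δ) * Real.exp (-δ / (4 * π)) * δ ^ s : ℝ) : ℂ)
          * Complex.exp (-2 * π * Complex.I * ((inner ℝ ξ t : ℝ) : ℂ)) := by
      rw [← h2, ← MeasureTheory.integral_mul_const]
    rw [h3, besselKernel, hC]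
    push_cast
    ring
  -- measurability of the joint integrand
  have hmeas : AEStronglyMeasurable (Function.uncurry G)
      ((volume : Measure (EuclideanSpace ℝ (Fin n))).prod (volume.restrict (Ioi 0))) := by
    apply Measurable.aestronglyMeasurable
    apply Measurable.mul
    · apply Complex.measurable_ofReal.comp
      apply Measurable.mul
      · apply Measurable.mul
        · exact Real.measurable_exp.comp
            ((measurable_const.mul ((measurable_norm.comp measurable_fst).pow_const 2)).div
              measurable_snd)
        · exact Real.measurable_exp.comp (measurable_snd.neg.div_const _)
      · fun_prop
    · have hcont : Continuous fun t : EuclideanSpace ℝ (Fin n) =>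
          Complex.exp (-2 * π * Complex.I * ((inner ℝ ξ t : ℝ) : ℂ)) :=
        Complex.continuous_exp.comp (continuous_const.mul
          (Complex.continuous_ofReal.comp (continuous_const.inner continuous_id)))
      exact hcont.measurable.comp measurable_fst
  -- norm of the integrand
  have hnorm : ∀ (δ : ℝ), 0 < δ → ∀ t : EuclideanSpace ℝ (Fin n),
      ‖G t δ‖ = Real.exp (-(π/δ) * ‖t‖^2) * (Real.exp (-δ/(4*π)) * δ ^ s) := by
    intro δ hδ t
    have hchar : ‖Complex.exp (-2 * π * Complex.I * ((inner ℝ ξ t : ℝ) : ℂ))‖ = 1 := by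
      rw [Complex.norm_exp]
      simp
    rw [hG, norm_mul, hchar, mul_one, Complex.norm_real, Real.norm_eq_abs, abs_of_nonneg
      (by positivity)]
    rw [show -π * ‖t‖^2 / δ = -(π/δ) * ‖t‖^2 by ring]
    ring
  -- the key integrability for Fubini
  have key : Integrable (Function.uncurry G)
      ((volume : Measure (EuclideanSpace ℝ (Fin n))).prod (volume.restrict (Ioi (0:ℝ)))) := by
    rw [MeasureTheory.integrable_prod_iff' hmeas]
    constructor
    · filter_upwards [ae_restrict_mem measurableSet_Ioi] with δ hδ
      have hδ0 : (0:ℝ) < δ := hδ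
      have hb : (0:ℝ) < (((π/δ:ℝ):ℂ)).re := by simpa using div_pos hπ hδ0
      have hint := (GaussianFourier.integrable_cexp_neg_mul_sq_norm_add (b := ((π/δ:ℝ):ℂ)) hb
        (-2 * π * Complex.I) ξ).const_mul ((Real.exp (-δ / (4 * π)) * δ ^ s : ℝ) : ℂ)
      refine hint.congr (Filter.Eventually.of_forall fun t => ?_)
      simp only [Function.uncurry_apply_pair, hG]
      rw [Complex.exp_add,
        show -((π/δ:ℝ):ℂ) * ((‖t‖:ℝ):ℂ)^2 = ((-π * ‖t‖^2/δ : ℝ):ℂ) from by push_cast; ring,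
        ← Complex.ofReal_exp]
      push_cast
      ring
    · have heq : ∀ δ ∈ Ioi (0:ℝ),
          (δ ^ (α/2 - 1) * Real.exp (-(1/(4*π)) * δ))
            = (∫ t : EuclideanSpace ℝ (Fin n), ‖Function.uncurry G (t, δ)‖) := by
        intro δ hδ
        have hδ0 : (0:ℝ) < δ := hδ
        have hb : (0:ℝ) < π/δ := div_pos hπ hδ0
        have h1 : (∫ t : EuclideanSpace ℝ (Fin n), ‖Function.uncurry G (t, δ)‖)
            = (∫ t : EuclideanSpace ℝ (Fin n), Real.exp (-(π/δ) * ‖t‖^2))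
              * (Real.exp (-δ/(4*π)) * δ ^ s) := by
          rw [← MeasureTheory.integral_mul_const]
          exact integral_congr_ae (Filter.Eventually.of_forall fun t => hnorm δ hδ0 t)
        rw [h1, GaussianFourier.integral_rexp_neg_mul_sq_norm hb]
        rw [show π / (π/δ) = δ from by field_simp]
        rw [show (Module.finrank ℝ (EuclideanSpace ℝ (Fin n)) : ℝ) = (n:ℝ) from by
          simp [finrank_euclideanSpace]]
        rw [show δ ^ ((n:ℝ)/2) * (Real.exp (-δ/(4*π)) * δ ^ s)
            = (δ ^ ((n:ℝ)/2) * δ ^ s) * Real.exp (-δ/(4*π)) from by ring]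
        rw [← Real.rpow_add hδ0]
        rw [show (n:ℝ)/2 + s = α/2 - 1 from by rw [hs]; ring]
        congr 2
        ring
      have hbase : IntegrableOn (fun δ : ℝ => δ ^ (α/2 - 1) * Real.exp (-(1/(4*π)) * δ))
          (Ioi (0:ℝ)) := by
        have h0 := integrableOn_rpow_mul_exp_neg_mul_rpow (p := 1) (s := α/2 - 1) (b := 1/(4*π))
          (by linarith) one_pos (by positivity)
        refine h0.congr_fun (fun x hx => ?_) measurableSet_Ioi
        simp only [Real.rpow_one]
      exact hbase.congr_fun heq measurableSet_Ioi
  -- Step 4: inner integral via the Gaussian Fourier transform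
  have inner_eq : ∀ δ ∈ Ioi (0:ℝ), (∫ t, G t δ) =
      (((δ ^ ((n:ℝ)/2) * Real.exp (-(π * ‖ξ‖^2) * δ) * (Real.exp (-δ/(4*π)) * δ ^ s)) : ℝ) : ℂ) := by
    intro δ hδ
    have hδ0 : (0:ℝ) < δ := hδ
    have hb : (0:ℝ) < (((π/δ:ℝ):ℂ)).re := by simpa using div_pos hπ hδ0
    have hFT := fourier_gaussian_innerProductSpace (b := ((π/δ:ℝ):ℂ)) hb ξ
    rw [Real.fourier_eq'] at hFT
    have hpt : ∀ t : EuclideanSpace ℝ (Fin n), G t δ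
        = ((Real.exp (-δ / (4 * π)) * δ ^ s : ℝ) : ℂ) *
          (Complex.exp (((-2 * π * (inner ℝ t ξ : ℝ) : ℝ) : ℂ) * Complex.I) •
            Complex.exp (-((π/δ:ℝ):ℂ) * (‖t‖:ℂ) ^ 2)) := by
      intro t
      rw [hG]
      beta_reduce
      rw [smul_eq_mul, real_inner_comm t ξ]
      rw [show (-((π/δ:ℝ):ℂ) * (‖t‖:ℂ)^2) = ((-π * ‖t‖^2/δ : ℝ) : ℂ) from by push_cast; ring]
      rw [← Complex.ofReal_exp]
      push_cast
      ring
    calc (∫ t, G t δ)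
        = ((Real.exp (-δ / (4 * π)) * δ ^ s : ℝ) : ℂ) *
            ∫ t, Complex.exp (((-2 * π * (inner ℝ t ξ : ℝ) : ℝ) : ℂ) * Complex.I) •
              Complex.exp (-((π/δ:ℝ):ℂ) * (‖t‖:ℂ) ^ 2) := by
          rw [← MeasureTheory.integral_const_mul]
          exact integral_congr_ae (Filter.Eventually.of_forall hpt)
      _ = _ := by
          rw [hFT]
          rw [show ((π:ℂ) / ((π/δ:ℝ):ℂ)) = ((δ:ℝ):ℂ) from by
            rw [show ((π:ℝ):ℂ) = (((π:ℝ):ℝ):ℂ) from rfl, ← Complex.ofReal_div,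
              show π/(π/δ) = δ from by field_simp]]
          rw [show ((Module.finrank ℝ (EuclideanSpace ℝ (Fin n)) : ℂ)/2) = (((n:ℝ)/2 : ℝ) : ℂ)
            from by simp [finrank_euclideanSpace]]
          rw [← Complex.ofReal_cpow hδ0.le]
          rw [show (-(π:ℂ)^2 * (‖ξ‖:ℂ)^2 / ((π/δ:ℝ):ℂ)) = ((-(π * ‖ξ‖^2) * δ : ℝ) : ℂ) from by
            push_cast; field_simp [hπc]]
          rw [← Complex.ofReal_exp]
          push_cast
          ring
  -- Step 5: outer integral
  have outer : (∫ δ in Ioi (0:ℝ), ∫ t, G t δ) = (((1/c) ^ (α/2) * Real.Gamma (α/2) : ℝ) : ℂ) := by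
    rw [setIntegral_congr_fun measurableSet_Ioi inner_eq]
    have h4 : (∫ δ in Ioi (0:ℝ),
          (((δ ^ ((n:ℝ)/2) * Real.exp (-(π * ‖ξ‖^2) * δ) * (Real.exp (-δ/(4*π)) * δ ^ s)) : ℝ) : ℂ))
        = ((∫ δ in Ioi (0:ℝ),
            δ ^ ((n:ℝ)/2) * Real.exp (-(π * ‖ξ‖^2) * δ) * (Real.exp (-δ/(4*π)) * δ ^ s) : ℝ) : ℂ) :=
      integral_ofReal
    rw [h4]
    congr 1
    have hptδ : ∀ δ ∈ Ioi (0:ℝ),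
        δ ^ ((n:ℝ)/2) * Real.exp (-(π * ‖ξ‖^2) * δ) * (Real.exp (-δ/(4*π)) * δ ^ s)
          = δ ^ (α/2 - 1) * Real.exp (-(c * δ)) := by
      intro δ hδ
      have hδ0 : (0:ℝ) < δ := hδ
      rw [show δ ^ ((n:ℝ)/2) * Real.exp (-(π * ‖ξ‖^2) * δ) * (Real.exp (-δ/(4*π)) * δ ^ s)
          = (δ ^ ((n:ℝ)/2) * δ ^ s) * (Real.exp (-(π * ‖ξ‖^2) * δ) * Real.exp (-δ/(4*π)))
          from by ring]
      rw [← Real.rpow_add hδ0, ← Real.exp_add]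
      rw [show (n:ℝ)/2 + s = α/2 - 1 from by rw [hs]; ring]
      congr 1
      rw [hcdef]
      ring
    rw [setIntegral_congr_fun measurableSet_Ioi hptδ]
    exact integral_rpow_mul_exp_neg_mul_Ioi (by positivity) hc
  -- Step 6: conclude
  rw [step1, MeasureTheory.integral_integral_swap key, outer, ← Complex.ofReal_mul]
  congr 1
  have hΓ : (0:ℝ) < Real.Gamma (α/2) := Real.Gamma_pos_of_pos (by positivity)
  have h4c : (4*π) * c = 1 + 4*π^2*‖ξ‖^2 := by rw [hcdef]; field_simp
  rw [← h4c, Real.rpow_neg (by positivity), Real.mul_rpow (by positivity) hc.le,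
    one_div, Real.inv_rpow hc.le, hC]
  have h1 : (4*π)^(α/2) ≠ 0 := by positivity
  field_simp
end

section
/- Reflection identity: if u is a positive solution of the integral equation u = g_α ∗ u^β on ℝⁿ, then for every real λ and every x, u(x) − u(x^λ) = ∫_{Σ_λ} (g_α(x−y) − g_α(x^λ−y)) (u(y)^β − u_λ(y)^β) dy, where x^λ = (2λ−x₁, x₂, …, xₙ), u_λ(x) = u(x^λ), and Σ_λ = {x : x₁ ≥ λ}. -/
open MeasureTheory Real

noncomputable def reflect (n : ℕ) [NeZero n] (l : ℝ) (x : EuclideanSpace ℝ (Fin n)) :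
    EuclideanSpace ℝ (Fin n) :=
  WithLp.toLp 2 (Function.update x 0 (2 * l - x 0))

lemma besselKernel_congr {n : ℕ} {α : ℝ} {a b : EuclideanSpace ℝ (Fin n)}
    (h : ‖a‖ = ‖b‖) : besselKernel n α a = besselKernel n α b := by
  unfold besselKernel; rw [h]

lemma euclidean_norm_congr {n : ℕ} {a b : EuclideanSpace ℝ (Fin n)}
    (h : ∀ i, ‖a i‖ = ‖b i‖) : ‖a‖ = ‖b‖ := by
  rw [EuclideanSpace.norm_eq, EuclideanSpace.norm_eq]
  congr 1
  exact Finset.sum_congr rfl fun i _ => by rw [h i]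

lemma reflect_zero (n : ℕ) [NeZero n] (l : ℝ) (x : EuclideanSpace ℝ (Fin n)) :
    reflect n l x 0 = 2 * l - x 0 := by
  unfold reflect; exact Function.update_self 0 (2 * l - x 0) x

lemma reflect_ne (n : ℕ) [NeZero n] (l : ℝ) (x : EuclideanSpace ℝ (Fin n)) {i : Fin n}
    (h : i ≠ 0) : reflect n l x i = x i := by
  unfold reflect; exact Function.update_of_ne h (2 * l - x 0) x

lemma reflect_involutive (n : ℕ) [NeZero n] (l : ℝ) :
    Function.Involutive (reflect n l) := by
  intro a
  ext i
  by_cases hi : i = 0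
  · subst hi
    rw [reflect_zero, reflect_zero, sub_sub_cancel]
  · rw [reflect_ne n l _ hi, reflect_ne n l _ hi]

lemma norm_sub_reflect (n : ℕ) [NeZero n] (l : ℝ) (a b : EuclideanSpace ℝ (Fin n)) :
    ‖a - reflect n l b‖ = ‖reflect n l a - b‖ := by
  apply euclidean_norm_congr
  intro i
  simp only [PiLp.sub_apply]
  by_cases hi : i = 0
  · subst hi
    rw [reflect_zero, reflect_zero, Real.norm_eq_abs, Real.norm_eq_abs,
      show a 0 - (2 * l - b 0) = -(2 * l - a 0 - b 0) by ring, abs_neg]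
  · rw [reflect_ne n l _ hi, reflect_ne n l _ hi]

lemma norm_reflect_sub_reflect (n : ℕ) [NeZero n] (l : ℝ) (a b : EuclideanSpace ℝ (Fin n)) :
    ‖reflect n l a - reflect n l b‖ = ‖a - b‖ := by
  apply euclidean_norm_congr
  intro i
  simp only [PiLp.sub_apply]
  by_cases hi : i = 0
  · subst hi
    rw [reflect_zero, reflect_zero, Real.norm_eq_abs, Real.norm_eq_abs,
      show 2 * l - a 0 - (2 * l - b 0) = -(a 0 - b 0) by ring, abs_neg]
  · rw [reflect_ne n l _ hi, reflect_ne n l _ hi]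

lemma reflect_measurePreserving (n : ℕ) [NeZero n] (l : ℝ) :
    MeasurePreserving (reflect n l) (volume : Measure (EuclideanSpace ℝ (Fin n))) volume := by
  have he := EuclideanSpace.volume_preserving_symm_measurableEquiv_toLp (Fin n)
  have he' := he.symm (MeasurableEquiv.toLp 2 (Fin n → ℝ)).symm
  have hcoord : MeasurePreserving (fun t : ℝ => 2 * l - t) volume volume := by
    simpa [Function.comp_def, sub_eq_add_neg] using
      (measurePreserving_add_left volume (2 * l)).comp (Measure.measurePreserving_neg volume)
  have hpi : MeasurePreserving
      (fun (y : Fin n → ℝ) (i : Fin n) => if i = 0 then 2 * l - y i else y i)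
      volume volume := by
    have := MeasureTheory.volume_preserving_pi
      (f := fun (i : Fin n) => if i = 0 then (fun t : ℝ => 2 * l - t) else id)
      (fun i => by
        by_cases hi : i = 0
        · simpa [hi] using hcoord
        · simpa [hi] using MeasurePreserving.id (volume : Measure ℝ))
    have hfeq : (fun (y : Fin n → ℝ) (i : Fin n) => if i = 0 then 2 * l - y i else y i) =
        fun a i => (if i = 0 then (fun t : ℝ => 2 * l - t) else id) (a i) := by
      funext y i
      by_cases hi : i = 0 <;> simp [hi]
    rw [hfeq]
    exact this
  have hcomp := (he'.comp hpi).comp he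
  have hfun : (⇑(MeasurableEquiv.toLp 2 (Fin n → ℝ)).symm.symm ∘
      (fun (y : Fin n → ℝ) (i : Fin n) => if i = 0 then 2 * l - y i else y i)) ∘
      ⇑(MeasurableEquiv.toLp 2 (Fin n → ℝ)).symm = reflect n l := by
    funext y
    ext i
    simp only [Function.comp_apply, MeasurableEquiv.symm_symm, MeasurableEquiv.coe_toLp,
      MeasurableEquiv.coe_toLp_symm]
    by_cases hi : i = 0
    · subst hi
      rw [reflect_zero]
      simp
    · rw [reflect_ne n l _ hi]
      simp [hi]
  rwa [hfun] at hcomp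

theorem reflection_identity (n : ℕ) [NeZero n] (hn : 1 ≤ n) (α β : ℝ) (hα : 0 < α) (hβ : 1 < β)
    (u : EuclideanSpace ℝ (Fin n) → ℝ) (hupos : ∀ x, 0 < u x)
    (humeas : Measurable u)
    (huloc : LocallyIntegrable (fun y => u y ^ β) volume)
    (heq : ∀ x, u x = ∫ y, besselKernel n α (x - y) * u y ^ β)
    (l : ℝ) (x : EuclideanSpace ℝ (Fin n)) :
    u x - u (reflect n l x) =
      ∫ y in {y : EuclideanSpace ℝ (Fin n) | l ≤ y 0},
        (besselKernel n α (x - y) - besselKernel n α (reflect n l x - y)) *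
          (u y ^ β - u (reflect n l y) ^ β) := by
  have hPre : MeasurePreserving (reflect n l) volume volume := reflect_measurePreserving n l
  have hInv : Function.Involutive (reflect n l) := reflect_involutive n l
  let Rme : EuclideanSpace ℝ (Fin n) ≃ᵐ EuclideanSpace ℝ (Fin n) :=
    { toEquiv := hInv.toPerm (reflect n l)
      measurable_toFun := hPre.measurable
      measurable_invFun := hPre.measurable }
  have hEmb : MeasurableEmbedding (reflect n l) := Rme.measurableEmbedding
  set S : Set (EuclideanSpace ℝ (Fin n)) := {y | l ≤ y 0} with hSdef
  have hev : Measurable (fun y : EuclideanSpace ℝ (Fin n) => y 0) := (measurable_pi_apply 0).comp (WithLp.measurable_ofLp 2 _)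
  have hSmeas : MeasurableSet S := measurableSet_le measurable_const hev
  have hnull : volume {y : EuclideanSpace ℝ (Fin n) | y 0 = l} = 0 := by
    have h1 : ({y : EuclideanSpace ℝ (Fin n) | y 0 = l} : Set _) =
        (MeasurableEquiv.toLp 2 (Fin n → ℝ)).symm ⁻¹' {z : Fin n → ℝ | z 0 = l} := rfl
    rw [h1, (EuclideanSpace.volume_preserving_symm_measurableEquiv_toLp (Fin n)).measure_preimage
      ((measurableSet_eq_fun (measurable_pi_apply 0) measurable_const).nullMeasurableSet)]
    rw [volume_pi]
    exact Measure.pi_hyperplane (fun _ : Fin n => (volume : Measure ℝ)) 0 l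
  have hS' : (reflect n l) ⁻¹' Sᶜ = {y : EuclideanSpace ℝ (Fin n) | l < y 0} := by
    ext y
    simp only [Set.mem_preimage, Set.mem_compl_iff, hSdef, Set.mem_setOf_eq, not_le,
      reflect_zero]
    constructor <;> intro h <;> linarith
  have hAE : {y : EuclideanSpace ℝ (Fin n) | l < y 0} =ᵐ[volume] S := by
    rw [MeasureTheory.ae_eq_set]
    constructor
    · refine measure_mono_null (t := (∅ : Set (EuclideanSpace ℝ (Fin n)))) ?_ measure_empty
      intro y hy
      have h1 : l < y 0 := hy.1
      exact absurd (show y ∈ S from le_of_lt h1) hy.2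
    · refine measure_mono_null (t := {y : EuclideanSpace ℝ (Fin n) | y 0 = l}) ?_ hnull
      intro y hy
      exact le_antisymm (not_lt.1 hy.2) hy.1
  set F : EuclideanSpace ℝ (Fin n) → ℝ := fun y => besselKernel n α (x - y) * u y ^ β with hFdef
  set G : EuclideanSpace ℝ (Fin n) → ℝ :=
    fun y => besselKernel n α (reflect n l x - y) * u y ^ β with hGdef
  have hFint : Integrable F volume := by
    by_contra h
    have h0 := heq x
    rw [integral_undef h] at h0
    exact absurd h0 (ne_of_gt (hupos x))
  have hGint : Integrable G volume := by
    by_contra h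
    have h0 := heq (reflect n l x)
    rw [integral_undef h] at h0
    exact absurd h0 (ne_of_gt (hupos (reflect n l x)))
  have hFRint : Integrable (fun y => F (reflect n l y)) volume :=
    (hPre.integrable_comp_emb hEmb).2 hFint
  have hGRint : Integrable (fun y => G (reflect n l y)) volume :=
    (hPre.integrable_comp_emb hEmb).2 hGint
  have hGR : ∀ y, G (reflect n l y) =
      besselKernel n α (x - y) * u (reflect n l y) ^ β := by
    intro y
    show besselKernel n α (reflect n l x - reflect n l y) * u (reflect n l y) ^ β = _
    rw [besselKernel_congr (norm_reflect_sub_reflect n l x y)]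
  have hFR : ∀ y, F (reflect n l y) =
      besselKernel n α (reflect n l x - y) * u (reflect n l y) ^ β := by
    intro y
    show besselKernel n α (x - reflect n l y) * u (reflect n l y) ^ β = _
    rw [besselKernel_congr (norm_sub_reflect n l x y)]
  have hflip : ∀ h : EuclideanSpace ℝ (Fin n) → ℝ,
      ∫ y in Sᶜ, h y = ∫ y in S, h (reflect n l y) := by
    intro h
    rw [← hPre.setIntegral_preimage_emb hEmb h Sᶜ, hS']
    exact setIntegral_congr_set hAE
  have hux : u x = (∫ y in S, F y) + ∫ y in S, F (reflect n l y) := by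
    rw [heq x, ← integral_add_compl hSmeas hFint, hflip F]
  have hux' : u (reflect n l x) =
      (∫ y in S, G y) + ∫ y in S, G (reflect n l y) := by
    rw [heq (reflect n l x), ← integral_add_compl hSmeas hGint, hflip G]
  have hpt : ∀ y, (besselKernel n α (x - y) - besselKernel n α (reflect n l x - y)) *
      (u y ^ β - u (reflect n l y) ^ β) =
      F y - G y - G (reflect n l y) + F (reflect n l y) := by
    intro y
    rw [hGR y, hFR y, hFdef, hGdef]
    ring
  rw [show (∫ y in S, (besselKernel n α (x - y) - besselKernel n α (reflect n l x - y)) *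
      (u y ^ β - u (reflect n l y) ^ β)) =
      ∫ y in S, (F y - G y - G (reflect n l y) + F (reflect n l y)) from
    integral_congr_ae (Filter.Eventually.of_forall fun y => hpt y)]
  have h1 : IntegrableOn (fun y => F y - G y) S volume :=
    hFint.integrableOn.sub hGint.integrableOn
  have h2 : IntegrableOn (fun y => F y - G y - G (reflect n l y)) S volume :=
    h1.sub hGRint.integrableOn
  have h3 : IntegrableOn (fun y => F (reflect n l y)) S volume := hFRint.integrableOn
  have h4 : IntegrableOn (fun y => G (reflect n l y)) S volume := hGRint.integrableOn
  rw [integral_add h2 h3, integral_sub h1 h4, integral_sub hFint.integrableOn hGint.integrableOn]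
  rw [hux, hux']
  ring
end
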